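/- Let G be an acyclic transitive digraph on a finite vertex set V and let O be a transitive orientation of the complement of G. Then tcl(G ∪ O) and tcl(G ∪ O⁻¹) are strict linear orders on V, and G is the intersection of these two linear orders. -/

import Mathlib

/-- Undirected closure of a digraph: `E ∪ E⁻¹`. -/
def ucl {V : Type*} (E : V → V → Prop) : V → V → Prop := fun a b => E a b ∨ E b a

/-- Complement of a digraph: all pairs of distinct vertices not in `ucl E`. -/
def cmpl {V : Type*} (E : V → V → Prop) : V → V → Prop := fun a b => a ≠ b ∧ ¬ ucl E a b

/-- A digraph is oriented iff `E ∩ E⁻¹ = ∅`. -/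
def Oriented {V : Type*} (E : V → V → Prop) : Prop := ∀ a b, E a b → ¬ E b a

/-- `O` is an orientation of `E`: a maximal oriented subset of `E`. -/
def IsOrientation {V : Type*} (O E : V → V → Prop) : Prop :=
  (∀ a b, O a b → E a b) ∧ Oriented O ∧
    ∀ O' : V → V → Prop, (∀ a b, O' a b → E a b) → Oriented O' →
      (∀ a b, O a b → O' a b) → ∀ a b, O' a b → O a b

/-- Transitivity of a digraph: `(a,b) ∈ E`, `(b,c) ∈ E` and `a ≠ c` imply `(a,c) ∈ E`. -/
def TransD {V : Type*} (E : V → V → Prop) : Prop :=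
  ∀ a b c, E a b → E b c → a ≠ c → E a c

/-- Transitive closure of a digraph. -/
def tcl {V : Type*} (E : V → V → Prop) : V → V → Prop := Relation.TransGen E

/-- A digraph is acyclic iff its transitive closure is irreflexive. -/
def Acyclic {V : Type*} (E : V → V → Prop) : Prop := Irreflexive (tcl E)

/-- A transitive orientation of `E` is an orientation of `E` that is transitive. -/
def IsTransOrientation {V : Type*} (O E : V → V → Prop) : Prop :=
  IsOrientation O E ∧ TransD O

/-- `E` is transitively orientable iff it has a transitive orientation. -/
def TransOrientable {V : Type*} (E : V → V → Prop) : Prop := ∃ O, IsTransOrientation O E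

/-- `L` is a strict linear order on the vertex set. -/
def IsStrictLinear {V : Type*} (L : V → V → Prop) : Prop :=
  Irreflexive L ∧ Transitive L ∧ ∀ a b : V, a ≠ b → L a b ∨ L b a

/-- `E` is 2-dimensional: the intersection of two strict linear orders. -/
def TwoDim {V : Type*} (E : V → V → Prop) : Prop :=
  ∃ L₁ L₂ : V → V → Prop, IsStrictLinear L₁ ∧ IsStrictLinear L₂ ∧
    ∀ a b, E a b ↔ L₁ a b ∧ L₂ a b

/-- Direct forcing `Γ` between edges of an undirected graph `E`:
`(a,b) Γ (c,d)` iff both are edges of `E` and either `a = c` with `b, d` non-adjacent,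
or `b = d` with `a, c` non-adjacent. -/
def Forces {V : Type*} (E : V → V → Prop) (e f : V × V) : Prop :=
  E e.1 e.2 ∧ E f.1 f.2 ∧
    ((e.1 = f.1 ∧ e.2 ≠ f.2 ∧ ¬ E e.2 f.2) ∨ (e.2 = f.2 ∧ e.1 ≠ f.1 ∧ ¬ E e.1 f.1))

/-- `S` is a 2-dimensional subgraph of `G`: a subgraph that is a 2-dimensional
acyclic transitive digraph. -/
def TwoDimSubgraph {V : Type*} (G S : V → V → Prop) : Prop :=
  (∀ a b, S a b → G a b) ∧ Irreflexive S ∧ TransD S ∧ Acyclic S ∧ TwoDim S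

/-- A permutation graph: an undirected graph such that both it and its complement
are transitively orientable. -/
def PermGraph {V : Type*} (E : V → V → Prop) : Prop :=
  Irreflexive E ∧ (∀ a b, E a b → E b a) ∧ TransOrientable E ∧ TransOrientable (cmpl E)

/-- `S` is a permutation subgraph of `G`: an undirected subgraph of `G` that is a
permutation graph. -/
def PermSubgraph {V : Type*} (G S : V → V → Prop) : Prop :=
  (∀ a b, S a b → G a b) ∧ PermGraph S

lemma mix_trans {V : Type*} (G P : V → V → Prop)
    (hirr : Irreflexive G) (hacyc : Acyclic G) (htrans : TransD G)
    (hPsub : ∀ a b, P a b → cmpl G a b) (hPor : Oriented P) (hPt : TransD P)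
    (hPtot : ∀ a b, cmpl G a b → P a b ∨ P b a) :
    Transitive (fun a b => G a b ∨ P a b) := by
  have hnG : ∀ x y, P x y → ¬ G x y ∧ ¬ G y x := fun x y h =>
    ⟨fun hg => (hPsub x y h).2 (Or.inl hg), fun hg => (hPsub x y h).2 (Or.inr hg)⟩
  have hGne : ∀ x y, G x y → x ≠ y := fun x y h he => hirr x (he ▸ h)
  have hPne : ∀ x y, P x y → x ≠ y := fun x y h => (hPsub x y h).1
  intro a b c hab hbc
  by_cases hac : a = c
  · subst hac
    exfalso
    rcases hab with h1 | h1 <;> rcases hbc with h2 | h2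
    · exact hacyc a (Relation.TransGen.head h1 (Relation.TransGen.single h2))
    · exact (hnG b a h2).2 h1
    · exact (hnG a b h1).2 h2
    · exact hPor a b h1 h2
  · rcases hab with h1 | h1 <;> rcases hbc with h2 | h2
    · exact Or.inl (htrans a b c h1 h2 hac)
    · -- G a b, P b c
      by_cases hGac : G a c
      · exact Or.inl hGac
      by_cases hGca : G c a
      · exact absurd (htrans c a b hGca h1 (Ne.symm (hPne b c h2))) (hnG b c h2).2
      rcases hPtot a c ⟨hac, fun h => h.elim hGac hGca⟩ with h | h
      · exact Or.inr h
      · exact absurd (hPt b c a h2 h (Ne.symm (hGne a b h1))) fun hba => (hnG b a hba).2 h1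
    · -- P a b, G b c
      by_cases hGac : G a c
      · exact Or.inl hGac
      by_cases hGca : G c a
      · exact absurd (htrans b c a h2 hGca (Ne.symm (hPne a b h1))) (hnG a b h1).2
      rcases hPtot a c ⟨hac, fun h => h.elim hGac hGca⟩ with h | h
      · exact Or.inr h
      · exact absurd (hPt c a b h h1 (Ne.symm (hGne b c h2))) fun hcb => (hnG c b hcb).2 h2
    · exact Or.inr (hPt a b c h1 h2 hac)

theorem linearizations_intersect_to_G
    {V : Type*} [Fintype V] (G O : V → V → Prop)
    (hirr : Irreflexive G) (hacyc : Acyclic G) (htrans : TransD G)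
    (hO : IsTransOrientation O (cmpl G)) :
    IsStrictLinear (tcl (fun a b => G a b ∨ O a b)) ∧
    IsStrictLinear (tcl (fun a b => G a b ∨ O b a)) ∧
    ∀ a b, G a b ↔
      tcl (fun a b => G a b ∨ O a b) a b ∧ tcl (fun a b => G a b ∨ O b a) a b := by
  obtain ⟨⟨hsub, horr, hmax⟩, htO⟩ := hO
  have hcs : ∀ a b, cmpl G a b → cmpl G b a := by
    rintro a b ⟨hne, h⟩
    exact ⟨hne.symm, fun h' => h (h'.elim Or.inr Or.inl)⟩
  -- totality of O on the complement
  have htot : ∀ a b, cmpl G a b → O a b ∨ O b a := by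
    intro a b hab
    by_contra h
    push_neg at h
    obtain ⟨h1, h2⟩ := h
    apply h1
    refine hmax (fun x y => O x y ∨ (x = a ∧ y = b)) ?_ ?_
      (fun x y h => Or.inl h) a b (Or.inr ⟨rfl, rfl⟩)
    · rintro x y (h | ⟨rfl, rfl⟩)
      · exact hsub x y h
      · exact hab
    · rintro x y (h | ⟨rfl, rfl⟩) (h' | ⟨h3, h4⟩)
      · exact horr x y h h'
      · exact h2 (h3 ▸ h4 ▸ h)
      · exact h2 h'
      · exact hab.1 h4
  have hOirr : ∀ a b, O a b → a ≠ b := fun a b h => (hsub a b h).1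
  -- both relations are transitive
  have hT1 : Transitive (fun a b => G a b ∨ O a b) :=
    mix_trans G O hirr hacyc htrans hsub horr htO htot
  have hT2 : Transitive (fun a b => G a b ∨ O b a) := by
    refine mix_trans G (fun a b => O b a) hirr hacyc htrans
      (fun a b h => hcs b a (hsub b a h)) (fun a b h h' => horr b a h h')
      (fun a b c h h' hne => htO c b a h' h (Ne.symm hne))
      (fun a b h => (htot a b h).symm)
  have hI1 : Irreflexive (fun a b : V => G a b ∨ O a b) := by
    rintro a (h | h)
    · exact hirr a h
    · exact hOirr a a h rfl
  have hI2 : Irreflexive (fun a b : V => G a b ∨ O b a) := by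
    rintro a (h | h)
    · exact hirr a h
    · exact hOirr a a h rfl
  have he1 : tcl (fun a b => G a b ∨ O a b) = fun a b => G a b ∨ O a b :=
    by haveI : IsTrans V _ := ⟨hT1⟩; exact Relation.transGen_eq_self
  have he2 : tcl (fun a b => G a b ∨ O b a) = fun a b => G a b ∨ O b a :=
    by haveI : IsTrans V _ := ⟨hT2⟩; exact Relation.transGen_eq_self
  have htotal : ∀ a b : V, a ≠ b → ¬ G a b → ¬ G b a → O a b ∨ O b a :=
    fun a b hne h h' => htot a b ⟨hne, fun hu => hu.elim h h'⟩
  refine ⟨⟨?_, ?_, ?_⟩, ⟨?_, ?_, ?_⟩, ?_⟩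
  · rw [he1]; exact hI1
  · rw [he1]; exact hT1
  · intro a b hne
    rw [he1]
    by_cases h : G a b
    · exact Or.inl (Or.inl h)
    by_cases h' : G b a
    · exact Or.inr (Or.inl h')
    · exact (htotal a b hne h h').imp Or.inr Or.inr
  · rw [he2]; exact hI2
  · rw [he2]; exact hT2
  · intro a b hne
    rw [he2]
    by_cases h : G a b
    · exact Or.inl (Or.inl h)
    by_cases h' : G b a
    · exact Or.inr (Or.inl h')
    · exact (htotal a b hne h h').symm.imp Or.inr Or.inr
  · intro a b
    rw [he1, he2]
    constructor
    · exact fun h => ⟨Or.inl h, Or.inl h⟩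
    · rintro ⟨h1 | h1, h2 | h2⟩
      · exact h1
      · exact h1
      · exact h2
      · exact absurd h2 (horr a b h1)
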